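/- If M ⊆ [n]^d is a minimal non-basic subset such that every layer of [n]^d has non-empty intersection with M, then |M| ≤ d·n − (d−2). -/

import Mathlib

open Module

/-- A finite subset `M ⊆ [n]^d` (the cube identified with `Fin d → Fin n`) is *basic*
if every function on `M` decomposes as a sum of univariate functions. -/
def IsBasic {n d : ℕ} (M : Finset (Fin d → Fin n)) : Prop :=
  ∀ f : (Fin d → Fin n) → ℝ, ∃ g : Fin d → Fin n → ℝ,
    ∀ x ∈ M, f x = ∑ i, g i (x i)


/-- The linear map sending `g` to the function `x ↦ ∑ i, g i (x i)` on `K`. -/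
noncomputable def sumMap {n d : ℕ} (K : Finset (Fin d → Fin n)) :
    (Fin d → Fin n → ℝ) →ₗ[ℝ] (↥K → ℝ) where
  toFun g := fun x => ∑ i, g i (x.1 i)
  map_add' g h := by funext x; simp [Finset.sum_add_distrib]
  map_smul' c g := by funext x; simp [Finset.mul_sum]

/-- The summation functional on `Fin d → ℝ`. -/
noncomputable def lsum (d : ℕ) : (Fin d → ℝ) →ₗ[ℝ] ℝ where
  toFun c := ∑ i, c i
  map_add' g h := by simp [Finset.sum_add_distrib]
  map_smul' c g := by simp [Finset.mul_sum]

lemma basic_card_le {n d : ℕ} (hn : 0 < n) (hd : 0 < d)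
    (K : Finset (Fin d → Fin n)) (hK : IsBasic K) :
    K.card + (d - 1) ≤ d * n := by
  -- surjectivity of sumMap K
  have hsurj : Function.Surjective (sumMap K) := by
    intro φ
    obtain ⟨g, hg⟩ := hK (fun x => if h : x ∈ K then φ ⟨x, h⟩ else 0)
    refine ⟨g, funext fun x => ?_⟩
    have h := hg x.1 x.2
    rw [dif_pos x.2] at h
    simpa [sumMap] using h.symm
  have hrn := LinearMap.finrank_range_add_finrank_ker (sumMap K)
  have hdom : finrank ℝ (Fin d → Fin n → ℝ) = d * n := by
    simp [Module.finrank_pi_fintype]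
  have hrange : finrank ℝ (LinearMap.range (sumMap K)) = K.card := by
    rw [LinearMap.range_eq_top.2 hsurj, finrank_top]
    simp [Module.finrank_fintype_fun_eq_card]
  -- lsum is surjective, so its kernel has finrank d - 1
  have hlsurj : Function.Surjective (lsum d) := by
    intro r
    exact ⟨Pi.single ⟨0, hd⟩ r, by simp [lsum]⟩
  have hlrn := LinearMap.finrank_range_add_finrank_ker (lsum d)
  have hlrange : finrank ℝ (LinearMap.range (lsum d)) = 1 := by
    rw [LinearMap.range_eq_top.2 hlsurj, finrank_top, Module.finrank_self]
  have hldom : finrank ℝ (Fin d → ℝ) = d := by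
    simp
  have hlker : finrank ℝ (LinearMap.ker (lsum d)) = d - 1 := by omega
  -- embed ker lsum into ker (sumMap K)
  let E : ↥(LinearMap.ker (lsum d)) →ₗ[ℝ] (Fin d → Fin n → ℝ) :=
    { toFun := fun c => fun i _ => c.1 i
      map_add' := fun a b => by funext i j; simp
      map_smul' := fun r a => by funext i j; simp }
  have hEinj : Function.Injective E := by
    intro a b hab
    ext i
    have := congrFun (congrFun hab i) ⟨0, hn⟩
    simpa [E] using this
  have hErange : LinearMap.range E ≤ LinearMap.ker (sumMap K) := by
    rintro _ ⟨c, rfl⟩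
    simp only [LinearMap.mem_ker]
    funext x
    have hc : ∑ i, c.1 i = 0 := c.2
    simpa [sumMap, E] using hc
  have hle : finrank ℝ (LinearMap.range E) ≤ finrank ℝ (LinearMap.ker (sumMap K)) :=
    Submodule.finrank_mono hErange
  have hEr : finrank ℝ (LinearMap.range E) = d - 1 := by
    rw [LinearMap.finrank_range_of_inj hEinj, hlker]
  omega

/-- If `M ⊆ [n]^d` is a minimal non-basic subset (non-basic, but every proper subset is
basic) meeting every layer `{x : x i = j}`, then `|M| ≤ d·n − (d−2)`. -/
theorem card_le_of_minimal_nonbasic {n d : ℕ} (hn : 0 < n) (hd : 0 < d)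
    (M : Finset (Fin d → Fin n))
    (hnb : ¬ IsBasic M)
    (hmin : ∀ K ⊂ M, IsBasic K)
    (hlayers : ∀ (i : Fin d) (j : Fin n), ∃ x ∈ M, x i = j) :
    M.card ≤ d * n - (d - 2) := by
  have hMne : M.Nonempty := by
    rcases M.eq_empty_or_nonempty with h | h
    · exact absurd (fun f => ⟨0, by simp [h]⟩) hnb
    · exact h
  rcases eq_or_lt_of_le (show 1 ≤ d from hd) with hd1 | hd2
  · -- d = 1 : every set is basic, contradiction
    exfalso
    apply hnb
    intro f
    subst hd1
    refine ⟨fun _ j => f (fun _ => j), fun x hx => ?_⟩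
    rw [Fin.sum_univ_one]
    exact congrArg f (funext fun i => congrArg x (Subsingleton.elim i 0))
  · obtain ⟨x₀, hx₀⟩ := hMne
    have hK : IsBasic (M.erase x₀) := hmin _ (Finset.erase_ssubset hx₀)
    have := basic_card_le hn hd _ hK
    have hcard : (M.erase x₀).card = M.card - 1 := Finset.card_erase_of_mem hx₀
    have hpos : 1 ≤ M.card := Finset.card_pos.2 ⟨x₀, hx₀⟩
    omega
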